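/- arXiv:1807.07707 — 4 statements merged into one kernel-verified Lean document; each statement's English description precedes it below -/
import Mathlib

section
/- Let L, σ² > 0, γ₁, γ₂, α₁, α₂ ∈ (0,1) with γ₁ + γ₂ = 1 and α₁ + α₂ = 1, and assume L/σ² > 1, γ₁L/(α₁σ²) > 1, and γ₂L/(α₂σ²) > 1. Then 2·C₁(L/σ²) − C₁(γ₂L/σ²) − C₁(L/(2σ²)) + C₁(γ₂L/(2σ²)) > α₁·C₁(γ₁L/(α₁σ²)) + α₂·C₁(γ₂L/(α₂σ²)). (The left side is the ergodic capacity of bi-directional cooperative NOMA with equal channel variances L₁ = L₂ = L; the right side is the ergodic capacity of OMA.) -/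
open Real MeasureTheory Set

/-- `C₁(x) = (1/ln 2) · e^{1/x} · ∫_1^∞ t⁻¹ e^{-t/x} dt`. -/
noncomputable def C1 (x : ℝ) : ℝ :=
  (1 / Real.log 2) * Real.exp (1 / x) * ∫ t in Set.Ioi (1:ℝ), t⁻¹ * Real.exp (-t / x)

namespace Stmt11Aux

open Filter

lemma integ_log {x : ℝ} (hx : 0 < x) :
    IntegrableOn (fun z => Real.exp (-z) * Real.log (1 + x * z)) (Ioi 0) := by
  have hg : IntegrableOn (fun z : ℝ => x * (Real.exp (-z) * z ^ ((2:ℝ) - 1))) (Ioi 0) :=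
    ((Real.GammaIntegral_convergent (by norm_num : (0:ℝ) < 2)).const_mul x)
  refine Integrable.mono hg ?_ ?_
  · apply (Measurable.aestronglyMeasurable ?_)
    exact (Real.measurable_exp.comp measurable_neg).mul
      ((measurable_const.add (measurable_const.mul measurable_id)).log)
  · filter_upwards [ae_restrict_mem measurableSet_Ioi] with z hz
    have hz0 : (0:ℝ) < z := hz
    have h1 : (0:ℝ) < 1 + x * z := by positivity
    have hlog0 : 0 ≤ Real.log (1 + x * z) := Real.log_nonneg (by nlinarith)
    have hlog : Real.log (1 + x * z) ≤ x * z := by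
      have := Real.log_le_sub_one_of_pos h1
      linarith
    have hzp : z ^ ((2:ℝ) - 1) = z := by norm_num
    rw [Real.norm_eq_abs, Real.norm_eq_abs, abs_of_nonneg, abs_of_nonneg]
    · rw [hzp]; have he := Real.exp_pos (-z); nlinarith
    · positivity
    · positivity

lemma integ_frac {x : ℝ} (hx : 0 < x) :
    IntegrableOn (fun z => Real.exp (-z) * (x / (1 + x * z))) (Ioi 0) := by
  have hg : IntegrableOn (fun z : ℝ => Real.exp (-1 * z) * x) (Ioi 0) :=
    ((exp_neg_integrableOn_Ioi 0 one_pos).mul_const x)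
  refine Integrable.mono hg ?_ ?_
  · apply (Measurable.aestronglyMeasurable ?_)
    exact (Real.measurable_exp.comp measurable_neg).mul
      (measurable_const.div (measurable_const.add (measurable_const.mul measurable_id)))
  · filter_upwards [ae_restrict_mem measurableSet_Ioi] with z hz
    have hz0 : (0:ℝ) < z := hz
    have h1 : (0:ℝ) < 1 + x * z := by positivity
    have hfr : x / (1 + x * z) ≤ x := by
      rw [div_le_iff₀ h1]; nlinarith [mul_pos hx hz0]
    rw [Real.norm_eq_abs, Real.norm_eq_abs, abs_of_nonneg (by positivity),
      abs_of_nonneg (by positivity)]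
    have hne : Real.exp (-1 * z) = Real.exp (-z) := by norm_num
    rw [hne]
    nlinarith [Real.exp_pos (-z), div_nonneg hx.le h1.le]

lemma ibp {x : ℝ} (hx : 0 < x) :
    ∫ z in Ioi (0:ℝ), Real.exp (-z) * (x / (1 + x * z))
      = ∫ z in Ioi (0:ℝ), Real.exp (-z) * Real.log (1 + x * z) := by
  have key : ∫ z in Ioi (0:ℝ),
      (Real.exp (-z) * Real.log (1 + x * z) - Real.exp (-z) * (x / (1 + x * z))) = 0 := by
    have hderiv : ∀ z ∈ Ici (0:ℝ),
        HasDerivAt (fun z => -(Real.exp (-z) * Real.log (1 + x * z)))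
          (Real.exp (-z) * Real.log (1 + x * z) - Real.exp (-z) * (x / (1 + x * z))) z := by
      intro z hz
      have h1 : (0:ℝ) < 1 + x * z := by
        have : (0:ℝ) ≤ z := hz
        positivity
      have he : HasDerivAt (fun z : ℝ => Real.exp (-z)) (-Real.exp (-z)) z := by
        simpa using ((hasDerivAt_neg z).exp)
      have hl : HasDerivAt (fun z : ℝ => Real.log (1 + x * z)) (x / (1 + x * z)) z := by
        have hi : HasDerivAt (fun z : ℝ => 1 + x * z) x z := by
          simpa using ((hasDerivAt_id z).const_mul x).const_add 1
        simpa using (hi.log h1.ne')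
      have := (he.mul hl).neg
      exact this.congr_deriv (by ring)
    have hint : IntegrableOn (fun z =>
        Real.exp (-z) * Real.log (1 + x * z) - Real.exp (-z) * (x / (1 + x * z))) (Ioi 0) :=
      (integ_log hx).sub (integ_frac hx)
    have htend : Tendsto (fun z => -(Real.exp (-z) * Real.log (1 + x * z))) atTop (nhds 0) := by
      have hb : Tendsto (fun z : ℝ => x * (z ^ 1 * Real.exp (-z))) atTop (nhds 0) := by
        simpa using (Real.tendsto_pow_mul_exp_neg_atTop_nhds_zero 1).const_mul x
      have hpos : Tendsto (fun z : ℝ => Real.exp (-z) * Real.log (1 + x * z)) atTop (nhds 0) := by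
        apply tendsto_of_tendsto_of_tendsto_of_le_of_le' tendsto_const_nhds hb
        · filter_upwards [eventually_ge_atTop (0:ℝ)] with z hz
          have h1 : (0:ℝ) < 1 + x * z := by positivity
          have := Real.log_nonneg (by nlinarith : (1:ℝ) ≤ 1 + x * z)
          positivity
        · filter_upwards [eventually_ge_atTop (0:ℝ)] with z hz
          have h1 : (0:ℝ) < 1 + x * z := by positivity
          have hlog : Real.log (1 + x * z) ≤ x * z := by
            have := Real.log_le_sub_one_of_pos h1; linarith
          have hlog0 : 0 ≤ Real.log (1 + x * z) := Real.log_nonneg (by nlinarith)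
          have he := Real.exp_pos (-z)
          have hz1 : z ^ 1 = z := pow_one z
          rw [hz1]
          nlinarith
      simpa using hpos.neg
    have := integral_Ioi_of_hasDerivAt_of_tendsto' hderiv hint htend
    simpa using this
  have := integral_sub (integ_log hx) (integ_frac hx)
  rw [key] at this
  linarith [this]

lemma subst {x : ℝ} (hx : 0 < x) :
    (∫ t in Ioi (1:ℝ), t⁻¹ * Real.exp (-t / x))
      = Real.exp (-(1/x)) * ∫ z in Ioi (0:ℝ), Real.exp (-z) * (x / (1 + x * z)) := by
  have hmp : MeasurePreserving (fun z : ℝ => z + 1) volume volume :=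
    measurePreserving_add_right volume 1
  have hemb : MeasurableEmbedding (fun z : ℝ => z + 1) :=
    (MeasurableEquiv.addRight (1:ℝ)).measurableEmbedding
  have hpre : ((fun z : ℝ => z + 1) ⁻¹' Ioi 1) = Ioi 0 := by
    ext z; simp
  have h1 : (∫ t in Ioi (1:ℝ), t⁻¹ * Real.exp (-t / x))
      = ∫ z in Ioi (0:ℝ), (z + 1)⁻¹ * Real.exp (-(z + 1) / x) := by
    rw [← hmp.setIntegral_preimage_emb hemb (fun t => t⁻¹ * Real.exp (-t / x)) (Ioi 1), hpre]
  have h2 : (∫ z in Ioi (0:ℝ), ((x * z) + 1)⁻¹ * Real.exp (-((x * z) + 1) / x))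
      = x⁻¹ • ∫ z in Ioi (0:ℝ), (z + 1)⁻¹ * Real.exp (-(z + 1) / x) := by
    have := integral_comp_mul_left_Ioi (fun z : ℝ => (z + 1)⁻¹ * Real.exp (-(z + 1) / x)) 0 hx
    simpa using this
  rw [h1]
  have h3 : (∫ z in Ioi (0:ℝ), (z + 1)⁻¹ * Real.exp (-(z + 1) / x))
      = x • ∫ z in Ioi (0:ℝ), ((x * z) + 1)⁻¹ * Real.exp (-((x * z) + 1) / x) := by
    rw [h2, smul_smul, mul_inv_cancel₀ hx.ne', one_smul]
  rw [h3, smul_eq_mul, ← MeasureTheory.integral_const_mul, ← MeasureTheory.integral_const_mul]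
  apply setIntegral_congr_fun measurableSet_Ioi
  intro z hz
  have hz0 : (0:ℝ) < z := hz
  have h1xz : (0:ℝ) < 1 + x * z := by positivity
  have hexp : -(x * z + 1) / x = -(1/x) + -z := by
    field_simp; ring
  simp only [hexp, Real.exp_add]
  rw [add_comm (x*z) 1]
  field_simp

lemma C1_repr {x : ℝ} (hx : 0 < x) :
    C1 x = (1 / Real.log 2) * ∫ z in Ioi (0:ℝ), Real.exp (-z) * Real.log (1 + x * z) := by
  rw [C1, subst hx, ibp hx, ← mul_assoc, mul_assoc (1 / Real.log 2), ← Real.exp_add]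
  norm_num

lemma pointwise_ineq {b g2 a1 a2 c1 c2 z : ℝ} (hb : 0 < b) (hg2 : 0 < g2) (hg2' : g2 < 1)
    (ha1 : 0 < a1) (ha2 : 0 < a2) (hab : a1 + a2 = 1) (hc1 : 0 < c1) (hc2 : 0 < c2)
    (havg : a1 * c1 + a2 * c2 = b) (hz : 0 < z) :
    a1 * Real.log (1 + c1 * z) + a2 * Real.log (1 + c2 * z)
      < 2 * Real.log (1 + b * z) - Real.log (1 + g2 * b * z)
        - Real.log (1 + b / 2 * z) + Real.log (1 + g2 * b / 2 * z) := by
  have p1 : (0:ℝ) < 1 + b * z := by positivity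
  have p2 : (0:ℝ) < 1 + g2 * b * z := by positivity
  have p3 : (0:ℝ) < 1 + b / 2 * z := by positivity
  have p4 : (0:ℝ) < 1 + g2 * b / 2 * z := by positivity
  have p5 : (0:ℝ) < 1 + c1 * z := by positivity
  have p6 : (0:ℝ) < 1 + c2 * z := by positivity
  have jensen : a1 * Real.log (1 + c1 * z) + a2 * Real.log (1 + c2 * z)
      ≤ Real.log (1 + b * z) := by
    have := strictConcaveOn_log_Ioi.concaveOn.2 (mem_Ioi.mpr p5) (mem_Ioi.mpr p6)
      ha1.le ha2.le hab
    have harg : a1 • (1 + c1 * z) + a2 • (1 + c2 * z) = 1 + b * z := by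
      simp only [smul_eq_mul]; nlinarith [havg]
    rw [harg] at this
    simpa [smul_eq_mul] using this
  have prod : Real.log (1 + g2 * b * z) + Real.log (1 + b / 2 * z)
      < Real.log (1 + b * z) + Real.log (1 + g2 * b / 2 * z) := by
    rw [← Real.log_mul p2.ne' p3.ne', ← Real.log_mul p1.ne' p4.ne']
    apply Real.log_lt_log (by positivity)
    nlinarith [mul_pos hb hz, mul_pos (mul_pos hg2 hb) hz]
  linarith

end Stmt11Aux

theorem stmt11 (L σ2 γ1 γ2 α1 α2 : ℝ) (hL : 0 < L) (hσ : 0 < σ2)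
    (hγ1 : γ1 ∈ Set.Ioo (0:ℝ) 1) (hγ2 : γ2 ∈ Set.Ioo (0:ℝ) 1) (hγ : γ1 + γ2 = 1)
    (hα1 : α1 ∈ Set.Ioo (0:ℝ) 1) (hα2 : α2 ∈ Set.Ioo (0:ℝ) 1) (hα : α1 + α2 = 1)
    (h1 : 1 < L / σ2) (h2 : 1 < γ1 * L / (α1 * σ2)) (h3 : 1 < γ2 * L / (α2 * σ2)) :
    2 * C1 (L / σ2) - C1 (γ2 * L / σ2) - C1 (L / (2 * σ2)) + C1 (γ2 * L / (2 * σ2))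
      > α1 * C1 (γ1 * L / (α1 * σ2)) + α2 * C1 (γ2 * L / (α2 * σ2)) := by
  open Stmt11Aux in
  obtain ⟨hγ1l, hγ1u⟩ := hγ1
  obtain ⟨hγ2l, hγ2u⟩ := hγ2
  obtain ⟨hα1l, hα1u⟩ := hα1
  obtain ⟨hα2l, hα2u⟩ := hα2
  set b := L / σ2 with hbdef
  set c1 := γ1 * L / (α1 * σ2) with hc1def
  set c2 := γ2 * L / (α2 * σ2) with hc2def
  have hb : 0 < b := by rw [hbdef]; positivity
  have hc1 : 0 < c1 := by rw [hc1def]; positivity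
  have hc2 : 0 < c2 := by rw [hc2def]; positivity
  have e2 : γ2 * L / σ2 = γ2 * b := by rw [hbdef]; ring
  have e3 : L / (2 * σ2) = b / 2 := by rw [hbdef]; ring
  have e4 : γ2 * L / (2 * σ2) = γ2 * b / 2 := by rw [hbdef]; ring
  have havg : α1 * c1 + α2 * c2 = b := by
    have h5 : α1 * c1 = γ1 * b := by
      rw [hc1def, hbdef]; field_simp
    have h6 : α2 * c2 = γ2 * b := by
      rw [hc2def, hbdef]; field_simp
    rw [h5, h6, ← add_mul, hγ, one_mul]
  rw [e2, e3, e4, C1_repr hb, C1_repr (by positivity : (0:ℝ) < γ2 * b),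
    C1_repr (by positivity : (0:ℝ) < b / 2), C1_repr (by positivity : (0:ℝ) < γ2 * b / 2),
    C1_repr hc1, C1_repr hc2]
  have hlog2 : 0 < 1 / Real.log 2 := by
    have := Real.log_pos (by norm_num : (1:ℝ) < 2)
    positivity
  -- the six integrand functions
  set F : ℝ → ℝ → ℝ := fun x z => Real.exp (-z) * Real.log (1 + x * z) with hF
  have hF1 : IntegrableOn (F b) (Ioi 0) := integ_log hb
  have hF2 : IntegrableOn (F (γ2 * b)) (Ioi 0) := integ_log (by positivity)
  have hF3 : IntegrableOn (F (b / 2)) (Ioi 0) := integ_log (by positivity)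
  have hF4 : IntegrableOn (F (γ2 * b / 2)) (Ioi 0) := integ_log (by positivity)
  have hF5 : IntegrableOn (F c1) (Ioi 0) := integ_log hc1
  have hF6 : IntegrableOn (F c2) (Ioi 0) := integ_log hc2
  set D : ℝ → ℝ := fun z => ((((2 * F b z - F (γ2 * b) z) - F (b / 2) z) + F (γ2 * b / 2) z)
      - α1 * F c1 z) - α2 * F c2 z with hD
  have hDint : IntegrableOn D (Ioi 0) :=
    (((((hF1.const_mul 2).sub hF2).sub hF3).add hF4).sub (hF5.const_mul α1)).sub
      (hF6.const_mul α2)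
  have hDpos : ∀ z ∈ Ioi (0:ℝ), 0 < D z := by
    intro z hz
    have hz0 : (0:ℝ) < z := hz
    have hpt := pointwise_ineq hb hγ2l hγ2u hα1l hα2l hα hc1 hc2 havg hz0
    have he := Real.exp_pos (-z)
    simp only [hD, hF]
    nlinarith [hpt, he]
  have hae : 0 ≤ᵐ[volume.restrict (Ioi (0:ℝ))] D := by
    filter_upwards [ae_restrict_mem measurableSet_Ioi] with z hz
    exact (hDpos z hz).le
  have hIpos : 0 < ∫ z in Ioi (0:ℝ), D z := by
    rw [setIntegral_pos_iff_support_of_nonneg_ae hae hDint]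
    have hsub : Ioi (0:ℝ) ⊆ Function.support D ∩ Ioi 0 := fun z hz => ⟨(hDpos z hz).ne', hz⟩
    calc (0:ENNReal) < volume (Ioi (0:ℝ)) := by rw [Real.volume_Ioi]; exact ENNReal.zero_lt_top
      _ ≤ volume (Function.support D ∩ Ioi 0) := measure_mono hsub
  have A1 : IntegrableOn (fun z => 2 * F b z) (Ioi 0) volume := hF1.const_mul 2
  have A2 : IntegrableOn (fun z => 2 * F b z - F (γ2 * b) z) (Ioi 0) volume := A1.sub hF2
  have A3 : IntegrableOn (fun z => 2 * F b z - F (γ2 * b) z - F (b / 2) z) (Ioi 0) volume :=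
    A2.sub hF3
  have A4 : IntegrableOn
      (fun z => 2 * F b z - F (γ2 * b) z - F (b / 2) z + F (γ2 * b / 2) z) (Ioi 0) volume :=
    A3.add hF4
  have A5 : IntegrableOn (fun z => α1 * F c1 z) (Ioi 0) volume := hF5.const_mul α1
  have A6 : IntegrableOn
      (fun z => 2 * F b z - F (γ2 * b) z - F (b / 2) z + F (γ2 * b / 2) z - α1 * F c1 z)
      (Ioi 0) volume := A4.sub A5
  have A7 : IntegrableOn (fun z => α2 * F c2 z) (Ioi 0) volume := hF6.const_mul α2
  have hexpand : (∫ z in Ioi (0:ℝ), D z)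
      = ((((2 * (∫ z in Ioi (0:ℝ), F b z)) - (∫ z in Ioi (0:ℝ), F (γ2 * b) z))
        - (∫ z in Ioi (0:ℝ), F (b / 2) z)) + (∫ z in Ioi (0:ℝ), F (γ2 * b / 2) z))
        - α1 * (∫ z in Ioi (0:ℝ), F c1 z) - α2 * (∫ z in Ioi (0:ℝ), F c2 z) := by
    simp only [hD]
    rw [integral_sub A6 A7, integral_sub A4 A5, integral_add A3 hF4, integral_sub A2 hF3,
      integral_sub A1 hF2, MeasureTheory.integral_const_mul, MeasureTheory.integral_const_mul,
      MeasureTheory.integral_const_mul]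
  rw [hexpand] at hIpos
  have kk := mul_pos hlog2 hIpos
  simp only [hF] at kk
  simp only [gt_iff_lt]
  linarith [kk]
end

section
/- The function C₁ is strictly concave on (1,∞): for all real x, y with x, y > 1, x ≠ y, and all t ∈ (0,1), one has C₁(t·x + (1−t)·y) > t·C₁(x) + (1−t)·C₁(y). -/
open Real MeasureTheory Set

namespace C1aux

noncomputable def G (x : ℝ) : ℝ :=
  ∫ r in Set.Ioi (0:ℝ), Real.exp (-r) * (x / (1 + x * r))

lemma contOn {x : ℝ} (hx : 0 < x) :
    ContinuousOn (fun r : ℝ => Real.exp (-r) * (x / (1 + x * r))) (Ioi 0) := by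
  apply ContinuousOn.mul
  · exact (Real.continuous_exp.comp continuous_neg).continuousOn
  · apply ContinuousOn.div continuousOn_const
    · exact (continuous_const.add (continuous_const.mul continuous_id)).continuousOn
    · intro r hr
      have : (0:ℝ) < 1 + x * r := by
        have := mul_pos hx (mem_Ioi.mp hr)
        linarith
      exact this.ne'

lemma integrable_aux {x : ℝ} (hx : 0 < x) :
    IntegrableOn (fun r : ℝ => Real.exp (-r) * (x / (1 + x * r))) (Ioi 0) := by
  have hbd : IntegrableOn (fun r : ℝ => x * Real.exp (-1 * r)) (Ioi 0) :=
    (exp_neg_integrableOn_Ioi 0 one_pos).const_mul x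
  refine Integrable.mono' hbd ((contOn hx).aestronglyMeasurable measurableSet_Ioi) ?_
  filter_upwards [ae_restrict_mem measurableSet_Ioi] with r hr
  have hr0 : (0:ℝ) < r := hr
  have h1 : (0:ℝ) < 1 + x * r := by nlinarith
  have h2 : x / (1 + x * r) ≤ x := by
    rw [div_le_iff₀ h1]; nlinarith [mul_pos (mul_pos hx hx) hr0]
  have h3 : 0 ≤ x / (1 + x * r) := le_of_lt (div_pos hx h1)
  have h4 : (0:ℝ) < Real.exp (-r) := Real.exp_pos _
  rw [Real.norm_eq_abs, abs_of_nonneg (by positivity)]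
  calc Real.exp (-r) * (x / (1 + x * r)) ≤ Real.exp (-r) * x := by nlinarith
    _ = x * Real.exp (-1 * r) := by rw [neg_one_mul]; ring

lemma keyA {x : ℝ} (hx : 0 < x) :
    Real.exp (1 / x) * ∫ t in Ioi (1:ℝ), t⁻¹ * Real.exp (-t / x) = G x := by
  have h1 : (∫ t in Ioi (1:ℝ), t⁻¹ * Real.exp (-t / x))
      = ∫ s in Ioi (0:ℝ), (s + 1)⁻¹ * Real.exp (-(s + 1) / x) := by
    rw [← (measurePreserving_add_right volume (1:ℝ)).setIntegral_preimage_emb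
      (measurableEmbedding_addRight 1) (fun t => t⁻¹ * Real.exp (-t / x)) (Ioi 1)]
    congr 1
    ext s
    simp
  have h2 : (∫ r in Ioi (0:ℝ), (x * r + 1)⁻¹ * Real.exp (-(x * r + 1) / x))
      = x⁻¹ • ∫ s in Ioi (x * 0), (s + 1)⁻¹ * Real.exp (-(s + 1) / x) :=
    integral_comp_mul_left_Ioi (fun s => (s + 1)⁻¹ * Real.exp (-(s + 1) / x)) 0 hx
  rw [h1]
  have h3 : (∫ s in Ioi (0:ℝ), (s + 1)⁻¹ * Real.exp (-(s + 1) / x))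
      = x * ∫ r in Ioi (0:ℝ), (x * r + 1)⁻¹ * Real.exp (-(x * r + 1) / x) := by
    rw [h2, mul_zero, smul_eq_mul, ← mul_assoc, mul_inv_cancel₀ hx.ne', one_mul]
  rw [h3, G, ← integral_const_mul, ← integral_const_mul]
  apply setIntegral_congr_fun measurableSet_Ioi
  intro r hr
  have hr0 : (0:ℝ) < r := hr
  have h1xr : (0:ℝ) < 1 + x * r := by nlinarith
  have hexp : Real.exp (1 / x) * Real.exp (-(x * r + 1) / x) = Real.exp (-r) := by
    rw [← Real.exp_add]
    congr 1
    field_simp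
    ring
  calc Real.exp (1 / x) * (x * ((x * r + 1)⁻¹ * Real.exp (-(x * r + 1) / x)))
      = (Real.exp (1 / x) * Real.exp (-(x * r + 1) / x)) * (x * (x * r + 1)⁻¹) := by ring
    _ = Real.exp (-r) * (x / (1 + x * r)) := by
        rw [hexp, div_eq_mul_inv]; ring_nf

lemma pointwise {x y t r : ℝ} (hx : 1 < x) (hy : 1 < y) (hxy : x ≠ y)
    (ht : 0 < t) (ht1 : t < 1) (hr : 0 < r) :
    t * (Real.exp (-r) * (x / (1 + x * r))) + (1 - t) * (Real.exp (-r) * (y / (1 + y * r)))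
      < Real.exp (-r) * ((t * x + (1 - t) * y) / (1 + (t * x + (1 - t) * y) * r)) := by
  have he : (0:ℝ) < Real.exp (-r) := Real.exp_pos _
  have ha : (0:ℝ) < 1 + x * r := by nlinarith
  have hb : (0:ℝ) < 1 + y * r := by nlinarith
  have hc : (0:ℝ) < 1 + (t * x + (1 - t) * y) * r := by nlinarith
  have key : t * (x / (1 + x * r)) + (1 - t) * (y / (1 + y * r))
      < (t * x + (1 - t) * y) / (1 + (t * x + (1 - t) * y) * r) := by
    rw [mul_div_assoc', mul_div_assoc', div_add_div _ _ ha.ne' hb.ne',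
      div_lt_div_iff₀ (by positivity) hc]
    have hne : x - y ≠ 0 := sub_ne_zero.mpr hxy
    have hsq : 0 < (x - y) ^ 2 := by positivity
    nlinarith [mul_pos ht (sub_pos.mpr ht1), mul_pos (mul_pos ht (sub_pos.mpr ht1)) (mul_pos hsq (mul_pos hr hr))]
  calc t * (Real.exp (-r) * (x / (1 + x * r))) + (1 - t) * (Real.exp (-r) * (y / (1 + y * r)))
      = Real.exp (-r) * (t * (x / (1 + x * r)) + (1 - t) * (y / (1 + y * r))) := by ring
    _ < Real.exp (-r) * ((t * x + (1 - t) * y) / (1 + (t * x + (1 - t) * y) * r)) :=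
        (mul_lt_mul_iff_right₀ he).mpr key

end C1aux

theorem stmt12 : ∀ x y t : ℝ, 1 < x → 1 < y → x ≠ y → 0 < t → t < 1 →
    t * C1 x + (1 - t) * C1 y < C1 (t * x + (1 - t) * y) := by
  intro x y t hx hy hxy ht ht1
  set z := t * x + (1 - t) * y with hzdef
  have hx0 : (0:ℝ) < x := by linarith
  have hy0 : (0:ℝ) < y := by linarith
  have hz1 : 1 < z := by nlinarith
  have hz0 : (0:ℝ) < z := by linarith
  have hC : ∀ w : ℝ, 0 < w → C1 w = (1 / Real.log 2) * C1aux.G w := by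
    intro w hw
    rw [C1, mul_assoc, C1aux.keyA hw]
  rw [hC x hx0, hC y hy0, hC z hz0]
  have hlog : (0:ℝ) < 1 / Real.log 2 := by
    have := Real.log_pos (by norm_num : (1:ℝ) < 2)
    positivity
  have hG : t * C1aux.G x + (1 - t) * C1aux.G y < C1aux.G z := by
    set f : ℝ → ℝ := fun r => Real.exp (-r) * (z / (1 + z * r)) with hf
    set g : ℝ → ℝ := fun r => t * (Real.exp (-r) * (x / (1 + x * r)))
        + (1 - t) * (Real.exp (-r) * (y / (1 + y * r))) with hg
    have hif : IntegrableOn f (Ioi 0) := C1aux.integrable_aux hz0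
    have hig : IntegrableOn g (Ioi 0) :=
      ((C1aux.integrable_aux hx0).const_mul t).add ((C1aux.integrable_aux hy0).const_mul (1 - t))
    have hsub : (0:ℝ) < ∫ r in Ioi (0:ℝ), (f r - g r) := by
      refine (setIntegral_pos_iff_support_of_nonneg_ae (f := fun r => f r - g r)
        ?nonneg (hif.sub hig)).mpr ?_
      case nonneg =>
        filter_upwards [ae_restrict_mem measurableSet_Ioi] with r hr
        have := C1aux.pointwise hx hy hxy ht ht1 (mem_Ioi.mp hr)
        simp only [hf, hg, Pi.zero_apply]
        linarith
      have hsupp : Ioi (0:ℝ) ⊆ Function.support (fun r => f r - g r) := by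
        intro r hr
        have := C1aux.pointwise hx hy hxy ht ht1 (mem_Ioi.mp hr)
        simp only [Function.mem_support, hf, hg]
        intro h
        linarith [sub_eq_zero.mp h]
      have : volume (Ioi (0:ℝ)) ≤ volume (Function.support (fun r => f r - g r) ∩ Ioi 0) := by
        apply measure_mono
        intro r hr
        exact ⟨hsupp hr, hr⟩
      have hvol : volume (Ioi (0:ℝ)) = ⊤ := by simp
      rw [hvol, top_le_iff] at this
      rw [this]
      exact ENNReal.zero_lt_top
    have heq : (∫ r in Ioi (0:ℝ), (f r - g r))
        = C1aux.G z - (t * C1aux.G x + (1 - t) * C1aux.G y) := by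
      rw [integral_sub hif hig]
      congr 1
      rw [integral_add ((C1aux.integrable_aux hx0).const_mul t)
        ((C1aux.integrable_aux hy0).const_mul (1 - t)), integral_const_mul, integral_const_mul]
      rfl
    rw [heq] at hsub
    linarith
  calc t * ((1 / Real.log 2) * C1aux.G x) + (1 - t) * ((1 / Real.log 2) * C1aux.G y)
      = (1 / Real.log 2) * (t * C1aux.G x + (1 - t) * C1aux.G y) := by ring
    _ < (1 / Real.log 2) * C1aux.G z := (mul_lt_mul_iff_right₀ hlog).mpr hG
end

section
/- The function C₁ is twice differentiable on (0,∞), and for every x > 0 its second derivative satisfies C₁''(x) = (2/x³ + 1/x⁴)·C₁(x) − (1/ln 2)·(1/x³ + 1/x²). -/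
open Real MeasureTheory Set

noncomputable def Gfun (y : ℝ) : ℝ := ∫ u in Set.Ioi y, u⁻¹ * Real.exp (-u)

lemma integrable_g {a : ℝ} (ha : 0 < a) :
    IntegrableOn (fun u => u⁻¹ * Real.exp (-u)) (Ioi a) := by
  have h1 : IntegrableOn (fun u => a⁻¹ * Real.exp (-u)) (Ioi a) := by
    have h := (exp_neg_integrableOn_Ioi a one_pos).const_mul a⁻¹
    simpa [IntegrableOn] using h
  refine h1.mono' ?_ ?_
  · exact ((measurable_inv.mul (Real.measurable_exp.comp measurable_neg)).stronglyMeasurable).aestronglyMeasurable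
  · filter_upwards [ae_restrict_mem measurableSet_Ioi] with u hu
    have hu0 : 0 < u := ha.trans hu
    rw [Real.norm_eq_abs, abs_of_nonneg (by positivity)]
    exact mul_le_mul_of_nonneg_right (inv_anti₀ ha (le_of_lt hu)) (Real.exp_pos _).le

lemma hasDerivAt_G {y : ℝ} (hy : 0 < y) :
    HasDerivAt Gfun (-(y⁻¹ * Real.exp (-y))) y := by
  set a := y / 2 with ha_def
  have ha : 0 < a := by positivity
  have hay : a < y := by rw [ha_def]; linarith
  have key : ∀ z ∈ Ioi a, Gfun z = Gfun a - ∫ u in a..z, u⁻¹ * Real.exp (-u) := by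
    intro z hz
    have hz' : a < z := hz
    have hsplit : Ioc a z ∪ Ioi z = Ioi a := Ioc_union_Ioi_eq_Ioi hz'.le
    have hmeas : MeasurableSet (Ioi z) := measurableSet_Ioi
    have h1 : IntegrableOn (fun u => u⁻¹ * Real.exp (-u)) (Ioc a z) :=
      (integrable_g ha).mono_set Ioc_subset_Ioi_self
    have h2 : IntegrableOn (fun u => u⁻¹ * Real.exp (-u)) (Ioi z) :=
      (integrable_g ha).mono_set (Ioi_subset_Ioi hz'.le)
    have := setIntegral_union (Ioc_disjoint_Ioi le_rfl) hmeas h1 h2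
      (f := fun u => u⁻¹ * Real.exp (-u)) (μ := volume)
    rw [hsplit] at this
    rw [intervalIntegral.integral_of_le hz'.le]
    simp only [Gfun]
    rw [this]; ring
  have hint : IntervalIntegrable (fun u => u⁻¹ * Real.exp (-u)) volume a y := by
    rw [intervalIntegrable_iff_integrableOn_Ioc_of_le hay.le]
    exact (integrable_g ha).mono_set Ioc_subset_Ioi_self
  have hmeasF : StronglyMeasurableAtFilter (fun u => u⁻¹ * Real.exp (-u)) (nhds y) :=
    ((measurable_inv.mul (Real.measurable_exp.comp measurable_neg)).stronglyMeasurable).stronglyMeasurableAtFilter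
  have hcont : ContinuousAt (fun u => u⁻¹ * Real.exp (-u)) y :=
    (continuousAt_inv₀ hy.ne').mul (by fun_prop)
  have hD : HasDerivAt (fun z => Gfun a - ∫ u in a..z, u⁻¹ * Real.exp (-u))
      (-(y⁻¹ * Real.exp (-y))) y := by
    have := (intervalIntegral.integral_hasDerivAt_right hint hmeasF hcont).const_sub (Gfun a)
    simpa using this
  refine hD.congr_of_eventuallyEq ?_
  filter_upwards [isOpen_Ioi.mem_nhds (show y ∈ Ioi a from hay)] with z hz
  exact key z hz

lemma F_eq {x : ℝ} (hx : 0 < x) :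
    (∫ t in Set.Ioi (1:ℝ), t⁻¹ * Real.exp (-t / x)) = Gfun x⁻¹ := by
  have hb : (0:ℝ) < x⁻¹ := inv_pos.2 hx
  have h := integral_comp_mul_left_Ioi (fun u => u⁻¹ * Real.exp (-u)) 1 hb
  simp only [mul_one, inv_inv] at h
  have hL : (∫ t in Set.Ioi (1:ℝ), (x⁻¹ * t)⁻¹ * Real.exp (-(x⁻¹ * t)))
      = ∫ t in Set.Ioi (1:ℝ), x * (t⁻¹ * Real.exp (-t / x)) := by
    refine setIntegral_congr_fun measurableSet_Ioi (fun t ht => ?_)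
    have : (x⁻¹ * t)⁻¹ = x * t⁻¹ := by
      rw [mul_inv, inv_inv]
    rw [this]
    have : -(x⁻¹ * t) = -t / x := by ring
    rw [this]; ring
  rw [hL] at h
  rw [integral_const_mul] at h
  have hG : Gfun x⁻¹ = ∫ u in Set.Ioi x⁻¹, u⁻¹ * Real.exp (-u) := rfl
  rw [smul_eq_mul] at h
  have := mul_left_cancel₀ hx.ne' h
  rw [hG, this]

lemma hasDerivAt_F {x : ℝ} (hx : 0 < x) :
    HasDerivAt (fun y => ∫ t in Set.Ioi (1:ℝ), t⁻¹ * Real.exp (-t / y))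
      (Real.exp (-x⁻¹) / x) x := by
  have hG : HasDerivAt (fun y : ℝ => Gfun y⁻¹)
      (-((x⁻¹)⁻¹ * Real.exp (-x⁻¹)) * (-(x ^ 2)⁻¹)) x :=
    (hasDerivAt_G (inv_pos.2 hx)).comp x (hasDerivAt_inv hx.ne')
  have hval : -((x⁻¹)⁻¹ * Real.exp (-x⁻¹)) * (-(x ^ 2)⁻¹) = Real.exp (-x⁻¹) / x := by
    rw [inv_inv]; field_simp
  rw [hval] at hG
  refine hG.congr_of_eventuallyEq ?_
  filter_upwards [isOpen_Ioi.mem_nhds (show x ∈ Ioi (0:ℝ) from hx)] with y hy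
  exact F_eq hy

lemma hasDerivAt_C1 {x : ℝ} (hx : 0 < x) :
    HasDerivAt C1 (-(1 / x ^ 2) * C1 x + (1 / Real.log 2) / x) x := by
  have hE : HasDerivAt (fun y : ℝ => (1 / Real.log 2) * Real.exp (1 / y))
      ((1 / Real.log 2) * (Real.exp (1 / x) * (-(x ^ 2)⁻¹))) x := by
    have hinv : HasDerivAt (fun y : ℝ => 1 / y) (-(x ^ 2)⁻¹) x := by
      simpa [one_div] using hasDerivAt_inv hx.ne'
    exact ((Real.hasDerivAt_exp _).comp x hinv).const_mul _
  have hF := hasDerivAt_F hx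
  have hprod := hE.mul hF
  have hfun : (fun y => (1 / Real.log 2) * Real.exp (1 / y) *
      ∫ t in Set.Ioi (1:ℝ), t⁻¹ * Real.exp (-t / y)) = C1 := rfl
  have hprod : HasDerivAt C1 _ x := hprod
  convert hprod using 1
  have hexp : Real.exp (1 / x) * Real.exp (-x⁻¹) = 1 := by
    rw [← Real.exp_add]
    simp [one_div]
  unfold C1
  linear_combination (-(1 / (Real.log 2 * x))) * hexp

theorem stmt13 : ∀ x : ℝ, 0 < x →
    DifferentiableAt ℝ C1 x ∧ DifferentiableAt ℝ (deriv C1) x ∧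
    deriv (deriv C1) x
      = (2 / x^3 + 1 / x^4) * C1 x - (1 / Real.log 2) * (1 / x^3 + 1 / x^2) := by
  intro x hx
  have hC1 := hasDerivAt_C1 hx
  set c := 1 / Real.log 2 with hc
  -- D is the first derivative on (0, ∞)
  set D : ℝ → ℝ := fun y => -(1 / y ^ 2) * C1 y + c / y with hD_def
  have hEq : deriv C1 =ᶠ[nhds x] D := by
    filter_upwards [isOpen_Ioi.mem_nhds (show x ∈ Ioi (0:ℝ) from hx)] with y hy
    exact (hasDerivAt_C1 hy).deriv
  -- derivative of D at x
  have hpow : HasDerivAt (fun y : ℝ => -(1 / y ^ 2)) (2 / x ^ 3) x := by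
    have h2 : HasDerivAt (fun y : ℝ => y ^ 2) (2 * x) x := by
      simpa using hasDerivAt_pow 2 x
    have := (h2.inv (by positivity)).neg
    have e : -(-(2 * x) / (x ^ 2) ^ 2) = 2 / x ^ 3 := by
      rw [neg_div, neg_neg, div_eq_div_iff (pow_ne_zero 2 (pow_ne_zero 2 hx.ne')) (pow_ne_zero 3 hx.ne')]; ring
    rw [e] at this
    refine this.congr_of_eventuallyEq ?_
    filter_upwards with y; rw [one_div]; rfl
  have hcx : HasDerivAt (fun y : ℝ => c / y) (-(c / x ^ 2)) x := by
    have h := (hasDerivAt_inv hx.ne').const_mul c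
    simp only [div_eq_mul_inv]
    simpa [mul_neg] using h
  have hD : HasDerivAt D ((2 / x ^ 3) * C1 x +
      (-(1 / x ^ 2)) * (-(1 / x ^ 2) * C1 x + c / x) + -(c / x ^ 2)) x :=
    (hpow.mul hC1).add hcx
  have hderiv2 : deriv (deriv C1) x = (2 / x ^ 3) * C1 x +
      (-(1 / x ^ 2)) * (-(1 / x ^ 2) * C1 x + c / x) + -(c / x ^ 2) := by
    rw [hEq.deriv_eq]
    exact hD.deriv
  refine ⟨hC1.differentiableAt, ?_, ?_⟩
  · exact (hD.congr_of_eventuallyEq hEq).differentiableAt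
  · rw [hderiv2]
    field_simp
    ring
end

section
/- Let L₁, L₂, σ² > 0. The closed-form ergodic sum capacity of bi-directional cooperative NOMA, S(γ₂) = C₁(L₁/σ²) − C₁(γ₂L₁/σ²) + C₁(L₂/σ²) − C₁(L₁L₂/((L₁+L₂)σ²)) + C₁(γ₂L₁L₂/((L₁+L₂)σ²)), is a decreasing function of γ₂ on (0,1): for all 0 < γ ≤ γ' < 1, S(γ') ≤ S(γ). Equivalently, γ ↦ C₁(γL₁/σ²) − C₁(γL₁L₂/((L₁+L₂)σ²)) is increasing on (0,1). -/
open Real MeasureTheory Set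

lemma integral_comp_add_right_Ioi' (g : ℝ → ℝ) (a d : ℝ) :
    ∫ x in Ioi a, g (x + d) = ∫ x in Ioi (a + d), g x := by
  rw [← integral_indicator measurableSet_Ioi, ← integral_indicator measurableSet_Ioi,
    ← integral_add_right_eq_self (Set.indicator (Ioi (a + d)) g) d]
  congr 1
  ext x
  by_cases hx : a < x
  · rw [Set.indicator_of_mem (Set.mem_Ioi.mpr hx),
      Set.indicator_of_mem (Set.mem_Ioi.mpr (by linarith))]
  · rw [Set.indicator_of_notMem (by simpa using hx),
      Set.indicator_of_notMem (by simp; exact not_lt.mp hx)]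

lemma C1_scaled (x b : ℝ) (hx : 0 < x) (hb : 0 < b) :
    C1 (b * x) = (1 / Real.log 2) * ∫ u in Ioi (0:ℝ), Real.exp (-u / x) / (u + 1 / b) := by
  unfold C1
  rw [mul_assoc]
  congr 1
  rw [← integral_const_mul]
  have step1 : (∫ t in Ioi (1:ℝ), Real.exp (1 / (b * x)) * (t⁻¹ * Real.exp (-t / (b * x))))
      = ∫ t in Ioi (1:ℝ), t⁻¹ * Real.exp ((1 - t) / (b * x)) := by
    congr 1
    ext t
    rw [mul_left_comm, ← Real.exp_add]
    congr 2
    ring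
  rw [step1]
  have step2 : (∫ t in Ioi (1:ℝ), t⁻¹ * Real.exp ((1 - t) / (b * x)))
      = ∫ s in Ioi (0:ℝ), (s + 1)⁻¹ * Real.exp (-s / (b * x)) := by
    have h := integral_comp_add_right_Ioi' (fun t => t⁻¹ * Real.exp ((1 - t) / (b * x))) 0 1
    rw [zero_add] at h
    rw [← h]
    congr 1
    ext s
    congr 2
    ring
  rw [step2]
  have step3 : (∫ s in Ioi (0:ℝ), (s + 1)⁻¹ * Real.exp (-s / (b * x)))
      = b • ∫ u in Ioi (0:ℝ), (b * u + 1)⁻¹ * Real.exp (-(b * u) / (b * x)) := by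
    rw [integral_comp_mul_left_Ioi (fun s => (s + 1)⁻¹ * Real.exp (-s / (b * x))) 0 hb,
      mul_zero, smul_smul, mul_inv_cancel₀ hb.ne', one_smul]
  rw [step3, smul_eq_mul, ← integral_const_mul]
  congr 1
  ext u
  have he : -(b * u) / (b * x) = -u / x := by
    field_simp
  rw [he]
  have h2 : u + 1 / b = (b * u + 1) / b := by
    field_simp
  rw [h2, div_div_eq_mul_div]
  ring

lemma integrable_aux (x b : ℝ) (hx : 0 < x) (hb : 0 < b) :
    IntegrableOn (fun u => Real.exp (-u / x) / (u + 1 / b)) (Ioi 0) := by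
  have h1 : IntegrableOn (fun u : ℝ => b * Real.exp (-(1 / x) * u)) (Ioi 0) :=
    (exp_neg_integrableOn_Ioi 0 (by positivity)).const_mul b
  refine h1.mono' ?_ ?_
  · apply Measurable.aestronglyMeasurable
    exact (Real.measurable_exp.comp (measurable_id.neg.div_const x)).div
      (measurable_id.add_const (1 / b))
  · filter_upwards [ae_restrict_mem measurableSet_Ioi] with u hu
    have hu0 : (0:ℝ) < u := hu
    have hpos : 0 < u + 1 / b := by positivity
    have hb' : 1 / b ≤ u + 1 / b := by linarith
    rw [Real.norm_eq_abs, abs_of_nonneg (by positivity)]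
    rw [div_le_iff₀ hpos]
    have : Real.exp (-u / x) = Real.exp (-(1 / x) * u) := by
      congr 1; ring
    rw [this]
    have hexp : 0 < Real.exp (-(1 / x) * u) := Real.exp_pos _
    have hb1 : b * (1 / b) = 1 := by field_simp
    nlinarith [hb1, mul_nonneg (mul_nonneg hb.le hexp.le) hu0.le]

lemma key_mono (a c γ γ' : ℝ) (hc : 0 < c) (hca : c ≤ a) (hγ : 0 < γ) (hγγ : γ ≤ γ') :
    C1 (γ * a) - C1 (γ * c) ≤ C1 (γ' * a) - C1 (γ' * c) := by
  have ha : 0 < a := lt_of_lt_of_le hc hca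
  have hγ' : 0 < γ' := lt_of_lt_of_le hγ hγγ
  rw [C1_scaled a γ ha hγ, C1_scaled c γ hc hγ, C1_scaled a γ' ha hγ', C1_scaled c γ' hc hγ']
  rw [← mul_sub, ← mul_sub]
  have hlog : (0:ℝ) ≤ 1 / Real.log 2 := by
    have := Real.log_pos one_lt_two
    positivity
  apply mul_le_mul_of_nonneg_left _ hlog
  rw [← integral_sub (integrable_aux a γ ha hγ) (integrable_aux c γ hc hγ),
    ← integral_sub (integrable_aux a γ' ha hγ') (integrable_aux c γ' hc hγ')]
  apply setIntegral_mono_on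
    ((integrable_aux a γ ha hγ).sub (integrable_aux c γ hc hγ))
    ((integrable_aux a γ' ha hγ').sub (integrable_aux c γ' hc hγ'))
    measurableSet_Ioi
  intro u hu
  have hu0 : (0:ℝ) < u := hu
  simp only [Pi.sub_apply]
  rw [div_sub_div_same, div_sub_div_same]
  have hnum : 0 ≤ Real.exp (-u / a) - Real.exp (-u / c) := by
    have : -u / c ≤ -u / a := by
      rw [div_le_div_iff₀ hc ha]
      nlinarith
    have := Real.exp_le_exp.mpr this
    linarith
  have h1 : 0 < u + 1 / γ' := by positivity
  have h2 : u + 1 / γ' ≤ u + 1 / γ := by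
    have : 1 / γ' ≤ 1 / γ := one_div_le_one_div_of_le hγ hγγ
    linarith
  gcongr

theorem stmt15 (L1 L2 σ2 : ℝ) (hL1 : 0 < L1) (hL2 : 0 < L2) (hσ : 0 < σ2) :
    ∀ γ γ' : ℝ, 0 < γ → γ ≤ γ' → γ' < 1 →
      C1 (L1 / σ2) - C1 (γ' * L1 / σ2) + C1 (L2 / σ2)
          - C1 (L1 * L2 / ((L1 + L2) * σ2)) + C1 (γ' * L1 * L2 / ((L1 + L2) * σ2))
        ≤ C1 (L1 / σ2) - C1 (γ * L1 / σ2) + C1 (L2 / σ2)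
          - C1 (L1 * L2 / ((L1 + L2) * σ2)) + C1 (γ * L1 * L2 / ((L1 + L2) * σ2)) := by
  intro γ γ' hγ hγγ hγ1
  set a := L1 / σ2 with ha_def
  set c := L1 * L2 / ((L1 + L2) * σ2) with hc_def
  have hc : 0 < c := by positivity
  have hca : c ≤ a := by
    rw [hc_def, ha_def, div_le_div_iff₀ (by positivity) hσ]
    nlinarith [mul_pos (mul_pos hL1 hL1) hσ]
  have hkey := key_mono a c γ γ' hc hca hγ hγγ
  have e1 : γ' * L1 / σ2 = γ' * a := by rw [ha_def]; ring
  have e2 : γ * L1 / σ2 = γ * a := by rw [ha_def]; ring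
  have e3 : γ' * L1 * L2 / ((L1 + L2) * σ2) = γ' * c := by rw [hc_def]; ring
  have e4 : γ * L1 * L2 / ((L1 + L2) * σ2) = γ * c := by rw [hc_def]; ring
  rw [e1, e2, e3, e4]
  linarith
end
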